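/- Let p ∈ [0,1], α ∈ [0,1], β = √(1−α²), and consider the two-qubit matrix ρ̃ = (1/4)·(I₄ + (2/3)p(2α²−1)(σ₃⊗I₂ + I₂⊗σ₃) + (1/3)·Σⱼ σⱼ⊗σⱼ). Then the partial transpose ρ̃^{T₂} is positive semidefinite (equivalently, ρ̃ is separable) if and only if either 0 ≤ p ≤ √3/2, or √3/2 < p ≤ 1 and (2p−√3)/(4p) ≤ α² ≤ (√3+2p)/(4p). -/

import Mathlib

open Matrix Kronecker
open scoped ComplexOrder

/-- The three Pauli matrices. -/
noncomputable def pauli : Fin 3 → Matrix (Fin 2) (Fin 2) ℂ :=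
  ![!![0, 1; 1, 0], !![0, -Complex.I; Complex.I, 0], !![1, 0; 0, -1]]

/-- Partial transpose on the second qubit:
`(ρ^{T₂})_{(i,μ),(j,ν)} = ρ_{(i,ν),(j,μ)}`. -/
noncomputable def ptranspose (ρ : Matrix (Fin 2 × Fin 2) (Fin 2 × Fin 2) ℂ) :
    Matrix (Fin 2 × Fin 2) (Fin 2 × Fin 2) ℂ :=
  Matrix.of fun p q => ρ (p.1, q.2) (q.1, p.2)

lemma ptranspose_isHermitian {ρ : Matrix (Fin 2 × Fin 2) (Fin 2 × Fin 2) ℂ}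
    (h : ρ.IsHermitian) : (ptranspose ρ).IsHermitian := by
  ext ⟨i,μ⟩ ⟨j,ν⟩
  simpa [ptranspose, Matrix.conjTranspose_apply] using h.apply (i, ν) (j, μ)

lemma kron_isHermitian {A B : Matrix (Fin 2) (Fin 2) ℂ}
    (hA : A.IsHermitian) (hB : B.IsHermitian) : (A ⊗ₖ B).IsHermitian := by
  ext ⟨i,μ⟩ ⟨j,ν⟩
  have h1 := hA.apply i j
  have h2 := hB.apply μ ν
  simp only [Matrix.conjTranspose_apply, Matrix.kroneckerMap_apply, star_mul']
  rw [h1, h2]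

lemma smul_isHermitian {n : Type*} [Fintype n] {r : ℂ} (hr : star r = r)
    {M : Matrix n n ℂ} (h : M.IsHermitian) : (r • M).IsHermitian := by
  unfold Matrix.IsHermitian at *
  rw [Matrix.conjTranspose_smul, h, hr]

lemma pauli_isHermitian (j : Fin 3) : (pauli j).IsHermitian := by
  fin_cases j <;>
  · ext i k
    fin_cases i <;> fin_cases k <;> simp [pauli, Matrix.conjTranspose_apply]

lemma rho_isHermitian (c : ℝ) :
    (ptranspose ((1/4 : ℂ) • ((1 : Matrix (Fin 2 × Fin 2) (Fin 2 × Fin 2) ℂ)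
        + ((c : ℝ) : ℂ) • (pauli 2 ⊗ₖ 1 + 1 ⊗ₖ pauli 2)
        + (1/3 : ℂ) • ∑ j : Fin 3, pauli j ⊗ₖ pauli j))).IsHermitian := by
  apply ptranspose_isHermitian
  have h1 : (1 : Matrix (Fin 2) (Fin 2) ℂ).IsHermitian := Matrix.isHermitian_one
  apply smul_isHermitian (by norm_num)
  apply Matrix.IsHermitian.add
  apply Matrix.IsHermitian.add Matrix.isHermitian_one
  · exact smul_isHermitian (by simp)
      ((kron_isHermitian (pauli_isHermitian 2) h1).add
        (kron_isHermitian h1 (pauli_isHermitian 2)))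
  · apply smul_isHermitian (by norm_num)
    rw [Fin.sum_univ_three]
    exact ((kron_isHermitian (pauli_isHermitian 0) (pauli_isHermitian 0)).add
      (kron_isHermitian (pauli_isHermitian 1) (pauli_isHermitian 1))).add
      (kron_isHermitian (pauli_isHermitian 2) (pauli_isHermitian 2))

/-- The quadratic form of the partially transposed local clone output, written as a real
number (cast to `ℂ`) in terms of the real and imaginary parts of the vector entries. -/
lemma rho_quadform_re (c : ℝ) (x : Fin 2 × Fin 2 → ℂ) :
    star x ⬝ᵥ (ptranspose ((1/4 : ℂ) • ((1 : Matrix (Fin 2 × Fin 2) (Fin 2 × Fin 2) ℂ)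
        + ((c : ℝ) : ℂ) • (pauli 2 ⊗ₖ 1 + 1 ⊗ₖ pauli 2)
        + (1/3 : ℂ) • ∑ j : Fin 3, pauli j ⊗ₖ pauli j))).mulVec x
    = (((1/3 + c/2) * ((x (0,0)).re^2 + (x (0,0)).im^2)
        + (1/3 - c/2) * ((x (1,1)).re^2 + (x (1,1)).im^2)
        + (1/6) * ((x (0,1)).re^2 + (x (0,1)).im^2 + (x (1,0)).re^2 + (x (1,0)).im^2)
        + (1/3) * ((x (0,0)).re * (x (1,1)).re + (x (0,0)).im * (x (1,1)).im) : ℝ) : ℂ) := by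
  have : star x ⬝ᵥ (ptranspose ((1/4 : ℂ) • ((1 : Matrix (Fin 2 × Fin 2) (Fin 2 × Fin 2) ℂ)
        + ((c : ℝ) : ℂ) • (pauli 2 ⊗ₖ 1 + 1 ⊗ₖ pauli 2)
        + (1/3 : ℂ) • ∑ j : Fin 3, pauli j ⊗ₖ pauli j))).mulVec x
    = ((1/3 + c/2 : ℝ) : ℂ) * (starRingEnd ℂ (x (0,0)) * x (0,0))
      + ((1/3 - c/2 : ℝ) : ℂ) * (starRingEnd ℂ (x (1,1)) * x (1,1))
      + ((1/6 : ℝ) : ℂ) * (starRingEnd ℂ (x (0,1)) * x (0,1) + starRingEnd ℂ (x (1,0)) * x (1,0))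
      + ((1/6 : ℝ) : ℂ) * (starRingEnd ℂ (x (0,0)) * x (1,1) + starRingEnd ℂ (x (1,1)) * x (0,0)) := by
    simp [ptranspose, pauli, Matrix.mulVec, dotProduct, Fintype.sum_prod_type,
      Fin.sum_univ_two, Fin.sum_univ_three, Matrix.kroneckerMap_apply, Matrix.one_apply,
      Matrix.smul_apply, Matrix.add_apply]
    ring
  rw [this]
  apply Complex.ext <;> simp [Complex.mul_re, Complex.mul_im, ← Complex.ofReal_pow] <;> ring

lemma rho_psd_iff (c : ℝ) :
    (ptranspose ((1/4 : ℂ) • ((1 : Matrix (Fin 2 × Fin 2) (Fin 2 × Fin 2) ℂ)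
        + ((c : ℝ) : ℂ) • (pauli 2 ⊗ₖ 1 + 1 ⊗ₖ pauli 2)
        + (1/3 : ℂ) • ∑ j : Fin 3, pauli j ⊗ₖ pauli j))).PosSemidef
    ↔ c ^ 2 ≤ 1/3 := by
  constructor
  · intro h
    have h1 := h.dotProduct_mulVec_nonneg (fun q => if q = ((0 : Fin 2), (0 : Fin 2)) then ((1/6 : ℝ) : ℂ)
      else if q = (1,1) then ((-(1/3 + c/2) : ℝ) : ℂ) else 0)
    have h2 := h.dotProduct_mulVec_nonneg (fun q => if q = ((0 : Fin 2), (0 : Fin 2)) then ((-(1/3 - c/2) : ℝ) : ℂ)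
      else if q = (1,1) then ((1/6 : ℝ) : ℂ) else 0)
    rw [rho_quadform_re, Complex.zero_le_real] at h1 h2
    norm_num at h1 h2
    nlinarith [h1, h2]
  · intro key
    refine Matrix.PosSemidef.of_dotProduct_mulVec_nonneg (rho_isHermitian c) fun x => ?_
    rw [rho_quadform_re, Complex.zero_le_real]
    set a := (x (0,0)).re; set b := (x (0,0)).im
    set e := (x (1,1)).re; set f := (x (1,1)).im
    have hA0 : 0 < 1/3 + c/2 := by nlinarith [sq_nonneg (c + 2/3)]
    have hAD : 36 * ((1/3 + c/2) * (1/3 - c/2)) - 1 ≥ 0 := by nlinarith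
    nlinarith [sq_nonneg (6*(1/3 + c/2)*a + e), sq_nonneg (6*(1/3 + c/2)*b + f),
      mul_pos hA0 hA0,
      mul_nonneg hAD.le (by positivity : (0:ℝ) ≤ e^2 + f^2),
      sq_nonneg (x (0,1)).re, sq_nonneg (x (0,1)).im,
      sq_nonneg (x (1,0)).re, sq_nonneg (x (1,0)).im,
      mul_nonneg hA0.le (by positivity : (0:ℝ) ≤
        (x (0,1)).re^2 + (x (0,1)).im^2 + (x (1,0)).re^2 + (x (1,0)).im^2)]

lemma scalar_iff (p α : ℝ)
    (hp0 : 0 ≤ p) (hp1 : p ≤ 1) (hα0 : 0 ≤ α) (hα1 : α ≤ 1) :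
    (2/3 * p * (2*α^2 - 1)) ^ 2 ≤ 1/3
    ↔ ((0 ≤ p ∧ p ≤ Real.sqrt 3 / 2) ∨
       (Real.sqrt 3 / 2 < p ∧ p ≤ 1 ∧
        (2*p - Real.sqrt 3) / (4*p) ≤ α^2 ∧ α^2 ≤ (Real.sqrt 3 + 2*p) / (4*p))) := by
  have hs0 : 0 < Real.sqrt 3 := Real.sqrt_pos.mpr (by norm_num)
  have hs3 : Real.sqrt 3 ^ 2 = 3 := Real.sq_sqrt (by norm_num)
  generalize hs : Real.sqrt 3 = s at *
  constructor
  · intro key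
    by_cases hps : p ≤ s / 2
    · exact Or.inl ⟨hp0, hps⟩
    · push_neg at hps
      have hp' : 0 < p := lt_trans (by positivity) hps
      have hq2 : (2*p*(2*α^2 - 1))^2 ≤ 3 := by nlinarith [key]
      have hl : -s ≤ 2*p*(2*α^2 - 1) := by nlinarith [sq_nonneg (2*p*(2*α^2-1) + s)]
      have hr : 2*p*(2*α^2 - 1) ≤ s := by nlinarith [sq_nonneg (2*p*(2*α^2-1) - s)]
      refine Or.inr ⟨hps, hp1, ?_, ?_⟩
      · rw [div_le_iff₀ (by linarith : (0:ℝ) < 4*p)]; nlinarith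
      · rw [le_div_iff₀ (by linarith : (0:ℝ) < 4*p)]; nlinarith
  · rintro (⟨_, hps⟩ | ⟨hps, _, hlo, hhi⟩)
    · have hα2 : α^2 ≤ 1 := by nlinarith
      have h1 : (2*α^2 - 1)^2 ≤ 1 := by nlinarith [sq_nonneg α]
      nlinarith [sq_nonneg p, mul_nonneg hp0 hp0]
    · have hp' : 0 < p := lt_trans (by positivity) hps
      rw [div_le_iff₀ (by linarith : (0:ℝ) < 4*p)] at hlo
      rw [le_div_iff₀ (by linarith : (0:ℝ) < 4*p)] at hhi
      have hprod : 0 ≤ (s - (4*p*α^2 - 2*p)) * (s + (4*p*α^2 - 2*p)) :=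
        mul_nonneg (by linarith) (by linarith)
      nlinarith [hprod]

/-- Separability range of the local outputs of werner-like states under local
cloning.  The local output `ρ̃₁₃ = {(2/3)xʷ, (2/3)xʷ, (1/3)I₃}` of the Buzek–Hillery local
optimal cloner applied to the werner-like state (parameters `p`, `α`, `β = √(1−α²)`) has
positive semidefinite partial transpose (i.e. is separable) iff either `0 ≤ p ≤ √3/2`, or
`√3/2 < p ≤ 1` and `(2p−√3)/(4p) ≤ α² ≤ (√3+2p)/(4p)`. -/
theorem wernerlike_local_output_separability (p α : ℝ)
    (hp0 : 0 ≤ p) (hp1 : p ≤ 1) (hα0 : 0 ≤ α) (hα1 : α ≤ 1) :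
    (ptranspose ((1/4 : ℂ) • ((1 : Matrix (Fin 2 × Fin 2) (Fin 2 × Fin 2) ℂ)
        + ((2/3 * p * (2*α^2 - 1) : ℝ) : ℂ) • (pauli 2 ⊗ₖ 1 + 1 ⊗ₖ pauli 2)
        + (1/3 : ℂ) • ∑ j : Fin 3, pauli j ⊗ₖ pauli j))).PosSemidef
    ↔ ((0 ≤ p ∧ p ≤ Real.sqrt 3 / 2) ∨
       (Real.sqrt 3 / 2 < p ∧ p ≤ 1 ∧
        (2*p - Real.sqrt 3) / (4*p) ≤ α^2 ∧ α^2 ≤ (Real.sqrt 3 + 2*p) / (4*p))) :=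
  (rho_psd_iff (2/3 * p * (2*α^2 - 1))).trans (scalar_iff p α hp0 hp1 hα0 hα1)
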